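/- Let H be a real Hilbert space and let S : H → H be an α-averaged θ-negatively averaged operator, i.e., S = (1−α)Id + αT where −T is θ-averaged, α ∈ (0,1), θ ∈ (0,1). Then S is Lipschitz with constant |1 − 2α + αθ| + αθ, which is strictly less than 1; hence S is contractive. -/
import Mathlib


theorem averaged_negatively_averaged_contractive
    {H : Type*} [NormedAddCommGroup H] [InnerProductSpace ℝ H]
    (α θ : ℝ) (hα0 : 0 < α) (hα1 : α < 1) (hθ0 : 0 < θ) (hθ1 : θ < 1)
    (T N S : H → H)
    (hN : ∀ x y : H, ‖N x - N y‖ ≤ ‖x - y‖)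
    (hT : ∀ x : H, T x = (θ - 1) • x + θ • N x)
    (hS : ∀ x : H, S x = (1 - α) • x + α • T x) :
    (∀ x y : H, ‖S x - S y‖ ≤ (|1 - 2 * α + α * θ| + α * θ) * ‖x - y‖) ∧
    |1 - 2 * α + α * θ| + α * θ < 1 := by
  constructor
  · intro x y
    have key : S x - S y = (1 - 2 * α + α * θ) • (x - y) + (α * θ) • (N x - N y) := by
      rw [hS, hS, hT, hT]
      module
    rw [key]
    calc ‖(1 - 2 * α + α * θ) • (x - y) + (α * θ) • (N x - N y)‖
        ≤ ‖(1 - 2 * α + α * θ) • (x - y)‖ + ‖(α * θ) • (N x - N y)‖ := norm_add_le _ _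
      _ = |1 - 2 * α + α * θ| * ‖x - y‖ + |α * θ| * ‖N x - N y‖ := by
          rw [norm_smul, norm_smul, Real.norm_eq_abs, Real.norm_eq_abs]
      _ ≤ |1 - 2 * α + α * θ| * ‖x - y‖ + (α * θ) * ‖x - y‖ := by
          rw [abs_of_pos (mul_pos hα0 hθ0)]
          gcongr
          exact hN x y
      _ = (|1 - 2 * α + α * θ| + α * θ) * ‖x - y‖ := by ring
  · rcases abs_cases (1 - 2 * α + α * θ) with ⟨h, _⟩ | ⟨h, _⟩ <;> rw [h] <;> nlinarith
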